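/- Monotonicity of robustness under mixing with separable states: for any density matrix σ, separable state π, and t ≥ 0, R((σ + tπ)/(1+t)) ≤ R(σ)/(1+t). -/

import Mathlib

open scoped BigOperators Matrix ComplexOrder

noncomputable section

/-- The pure product state |a⟩⟨a| ⊗ |b⟩⟨b| as a matrix on the bipartite index type. -/
def prodState {α β : Type*} [Fintype α] [Fintype β] (a : α → ℂ) (b : β → ℂ) :
    Matrix (α × β) (α × β) ℂ :=
  fun x y => (a x.1 * star (a y.1)) * (b x.2 * star (b y.2))

/-- A bipartite matrix is separable if it is a convex combination of pure product states. -/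
def SepState {α β : Type*} [Fintype α] [Fintype β]
    (σ : Matrix (α × β) (α × β) ℂ) : Prop :=
  ∃ (k : ℕ) (p : Fin k → ℝ) (a : Fin k → α → ℂ) (b : Fin k → β → ℂ),
    (∀ i, 0 ≤ p i) ∧ (∑ i, p i = 1) ∧
    (∀ i, ∑ x, ‖a i x‖ ^ 2 = 1) ∧ (∀ i, ∑ x, ‖b i x‖ ^ 2 = 1) ∧
    σ = ∑ i, ((p i : ℂ)) • prodState (a i) (b i)

/-- A density matrix: positive semidefinite with unit trace. -/
def IsDensity {n : Type*} [Fintype n] [DecidableEq n] (σ : Matrix n n ℂ) : Prop :=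
  σ.PosSemidef ∧ σ.trace = 1

/-- The robustness of entanglement: the least s ≥ 0 such that mixing σ with some
separable state π with weights 1/(1+s), s/(1+s) yields a separable state. -/
def robustness {α β : Type*} [Fintype α] [Fintype β] [DecidableEq α] [DecidableEq β]
    (σ : Matrix (α × β) (α × β) ℂ) : ℝ :=
  sInf { s : ℝ | 0 ≤ s ∧ ∃ π : Matrix (α × β) (α × β) ℂ, SepState π ∧
    SepState ((((1 + s)⁻¹ : ℝ) : ℂ) • σ + (((s / (1 + s)) : ℝ) : ℂ) • π) }

lemma sepState_convex {α β : Type*} [Fintype α] [Fintype β]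
    {ρ₁ ρ₂ : Matrix (α × β) (α × β) ℂ} (h₁ : SepState ρ₁) (h₂ : SepState ρ₂)
    {c d : ℝ} (hc : 0 ≤ c) (hd : 0 ≤ d) (hcd : c + d = 1) :
    SepState ((c : ℂ) • ρ₁ + (d : ℂ) • ρ₂) := by
  obtain ⟨k₁, p₁, a₁, b₁, hp₁, hs₁, ha₁, hb₁, he₁⟩ := h₁
  obtain ⟨k₂, p₂, a₂, b₂, hp₂, hs₂, ha₂, hb₂, he₂⟩ := h₂
  refine ⟨k₁ + k₂, Fin.append (fun i => c * p₁ i) (fun i => d * p₂ i),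
    Fin.append a₁ a₂, Fin.append b₁ b₂, ?_, ?_, ?_, ?_, ?_⟩
  · intro i
    refine Fin.addCases (fun j => ?_) (fun j => ?_) i
    · simpa [Fin.append_left] using mul_nonneg hc (hp₁ j)
    · simpa [Fin.append_right] using mul_nonneg hd (hp₂ j)
  · rw [Fin.sum_univ_add]
    simp only [Fin.append_left, Fin.append_right, ← Finset.mul_sum, hs₁, hs₂]
    simpa using hcd
  · intro i
    refine Fin.addCases (fun j => ?_) (fun j => ?_) i
    · simpa [Fin.append_left] using ha₁ j
    · simpa [Fin.append_right] using ha₂ j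
  · intro i
    refine Fin.addCases (fun j => ?_) (fun j => ?_) i
    · simpa [Fin.append_left] using hb₁ j
    · simpa [Fin.append_right] using hb₂ j
  · rw [Fin.sum_univ_add]
    simp only [Fin.append_left, Fin.append_right]
    rw [he₁, he₂, Finset.smul_sum, Finset.smul_sum]
    push_cast
    simp [mul_smul]

set_option maxHeartbeats 1000000 in
/-- Mixing with a separable state decreases robustness: R((σ + tπ)/(1+t)) ≤ R(σ)/(1+t). -/
theorem robustness_mixing_monotone {m : ℕ} (σ π : Matrix (Fin m × Fin m) (Fin m × Fin m) ℂ) (hσ : IsDensity σ)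
    (hπ : SepState π) (t : ℝ) (ht : 0 ≤ t) :
    robustness ((((1 + t)⁻¹ : ℝ) : ℂ) • σ + (((t / (1 + t)) : ℝ) : ℂ) • π) ≤
      robustness σ / (1 + t) := by
  have ht1 : (0:ℝ) < 1 + t := by linarith
  set mix := (((1 + t)⁻¹ : ℝ) : ℂ) • σ + (((t / (1 + t)) : ℝ) : ℂ) • π with hmix
  unfold robustness
  set S2 := { s : ℝ | 0 ≤ s ∧ ∃ ρ : Matrix (Fin m × Fin m) (Fin m × Fin m) ℂ, SepState ρ ∧
    SepState ((((1 + s)⁻¹ : ℝ) : ℂ) • mix + (((s / (1 + s)) : ℝ) : ℂ) • ρ) } with hS2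
  set S1 := { s : ℝ | 0 ≤ s ∧ ∃ ρ : Matrix (Fin m × Fin m) (Fin m × Fin m) ℂ, SepState ρ ∧
    SepState ((((1 + s)⁻¹ : ℝ) : ℂ) • σ + (((s / (1 + s)) : ℝ) : ℂ) • ρ) } with hS1
  have ht1c : ((1:ℂ) + (t:ℂ)) ≠ 0 := by
    exact_mod_cast Complex.ofReal_ne_zero.mpr (ne_of_gt ht1)
  have fwd : ∀ s ∈ S1, s / (1 + t) ∈ S2 := by
    rintro s ⟨hs0, π', hπ', hsep⟩
    have hs1 : (0:ℝ) < 1 + s := by linarith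
    have hst : (0:ℝ) < 1 + s + t := by linarith
    refine ⟨div_nonneg hs0 ht1.le, π', hπ', ?_⟩
    have key : (((1 + s / (1 + t))⁻¹ : ℝ) : ℂ) • mix
          + (((s / (1 + t) / (1 + s / (1 + t))) : ℝ) : ℂ) • π'
        = ((((1 + s) / (1 + s + t)) : ℝ) : ℂ) •
            ((((1 + s)⁻¹ : ℝ) : ℂ) • σ + (((s / (1 + s)) : ℝ) : ℂ) • π')
          + ((((t / (1 + s + t))) : ℝ) : ℂ) • π := by
      have h1 : ((1:ℂ) + (s:ℂ)) ≠ 0 := by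
        exact_mod_cast Complex.ofReal_ne_zero.mpr (ne_of_gt hs1)
      have h2 : ((1:ℂ) + (s:ℂ) + (t:ℂ)) ≠ 0 := by
        exact_mod_cast Complex.ofReal_ne_zero.mpr (ne_of_gt hst)
      have h3 : ((1:ℂ) + (s:ℂ) / (1 + (t:ℂ))) ≠ 0 := by
        have : ((1 + s / (1 + t) : ℝ) : ℂ) ≠ 0 := by
          apply Complex.ofReal_ne_zero.mpr
          positivity
        push_cast at this
        exact this
      ext i j
      simp only [hmix, Matrix.add_apply, Matrix.smul_apply, smul_eq_mul]
      push_cast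
      field_simp
      ring
    rw [key]
    exact sepState_convex hsep hπ (by positivity) (by positivity)
      (by field_simp)
  have bwd : S2.Nonempty → S1.Nonempty := by
    rintro ⟨s', hs'0, ρ, hρ, hsep⟩
    set s := t + s' * (1 + t) with hsdef
    have hs0 : 0 ≤ s := by nlinarith
    have hs'1 : (0:ℝ) < 1 + s' := by linarith
    have hs1 : (0:ℝ) < 1 + s := by linarith
    have h1s : ((1:ℂ) + (s':ℂ)) ≠ 0 := by
      exact_mod_cast Complex.ofReal_ne_zero.mpr (ne_of_gt hs'1)
    have h1sc : ((1:ℂ) + ((t:ℂ) + (s':ℂ) * (1 + (t:ℂ)))) ≠ 0 := by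
      have : ((1 + s : ℝ) : ℂ) ≠ 0 := Complex.ofReal_ne_zero.mpr (ne_of_gt hs1)
      push_cast [hsdef] at this
      convert this using 2 <;> ring
    by_cases hs : s = 0
    · -- then t = 0 and s' = 0
      have ht0 : t = 0 := by nlinarith
      have hs'z : s' = 0 := by nlinarith
      refine ⟨0, le_refl 0, ρ, hρ, ?_⟩
      have hmixσ : mix = σ := by
        rw [hmix, ht0]; norm_num
      rw [hs'z, hmixσ] at hsep
      exact hsep
    · have hspos : (0:ℝ) < s := lt_of_le_of_ne hs0 (Ne.symm hs)
      have hsc : ((s:ℝ):ℂ) ≠ 0 := Complex.ofReal_ne_zero.mpr (ne_of_gt hspos)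
      refine ⟨s, hs0, (((t / s) : ℝ) : ℂ) • π + (((s' * (1 + t) / s) : ℝ) : ℂ) • ρ,
        sepState_convex hπ hρ (by positivity) (by positivity) (by field_simp; exact hsdef.symm), ?_⟩
      have hrel : 1 + s = (1 + s') * (1 + t) := by rw [hsdef]; ring
      have h1s'r : (1 + s' : ℝ) ≠ 0 := ne_of_gt hs'1
      have h1tr : (1 + t : ℝ) ≠ 0 := ne_of_gt ht1
      have h1sr : (1 + s : ℝ) ≠ 0 := ne_of_gt hs1
      have hsr : (s : ℝ) ≠ 0 := ne_of_gt hspos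
      have hA : ((1 + s)⁻¹ : ℝ) = (1 + s')⁻¹ * (1 + t)⁻¹ := by
        rw [hrel, mul_inv]
      have hB : (s / (1 + s) * (t / s) : ℝ) = (1 + s')⁻¹ * (t / (1 + t)) := by
        rw [hrel]; field_simp
      have hC : (s / (1 + s) * (s' * (1 + t) / s) : ℝ) = s' / (1 + s') := by
        rw [hrel]; field_simp
      have hAc := congrArg (Complex.ofReal) hA
      have hBc := congrArg (Complex.ofReal) hB
      have hCc := congrArg (Complex.ofReal) hC
      push_cast at hAc hBc hCc
      have key : (((1 + s)⁻¹ : ℝ) : ℂ) • σ + (((s / (1 + s)) : ℝ) : ℂ) •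
            ((((t / s) : ℝ) : ℂ) • π + (((s' * (1 + t) / s) : ℝ) : ℂ) • ρ)
          = (((1 + s')⁻¹ : ℝ) : ℂ) • mix + (((s' / (1 + s')) : ℝ) : ℂ) • ρ := by
        ext i j
        simp only [hmix, Matrix.add_apply, Matrix.smul_apply, smul_eq_mul]
        push_cast
        linear_combination (σ i j) * hAc + (π i j) * hBc + (ρ i j) * hCc
      rw [key]
      exact hsep
  by_cases hne : S1.Nonempty
  · have hbdd : BddBelow S2 := ⟨0, fun x hx => hx.1⟩
    rw [le_div_iff₀ ht1]
    refine le_csInf hne fun s hs => ?_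
    have h2 : sInf S2 ≤ s / (1 + t) := csInf_le hbdd (fwd s hs)
    rw [le_div_iff₀ ht1] at h2
    linarith
  · have h1 : S1 = ∅ := Set.not_nonempty_iff_eq_empty.mp hne
    have h2 : S2 = ∅ := Set.not_nonempty_iff_eq_empty.mp fun h => hne (bwd h)
    rw [h1, h2, Real.sInf_empty]
    simp
end
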